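/- A nonzero matrix moment functional L on E is diagonalizable (unitarily equivalent to a direct sum of scalar moment functionals) if and only if L has a finitely atomic representing measure ν = Σ_{j=1}^k M_jδ_{x_j} whose masses pairwise commute: M_iM_j = M_jM_i for all i,j. -/

import Mathlib

open Matrix Module.End
open scoped ComplexOrder

/-- Abstract joint eigenbasis for a commuting family of symmetric operators. -/
theorem joint_eigenbasis {𝕜 E : Type*} [RCLike 𝕜] [NormedAddCommGroup E]
    [InnerProductSpace 𝕜 E] [FiniteDimensional 𝕜 E] {n : ℕ}
    (hn : Module.finrank 𝕜 E = n) {k : Type*} (T : k → E →ₗ[𝕜] E)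
    (hSym : ∀ i, (T i).IsSymmetric) (hComm : Pairwise (Function.onFun Commute T)) :
    ∃ (b : OrthonormalBasis (Fin n) 𝕜 E) (d : k → Fin n → 𝕜),
      ∀ i r, T i (b r) = d i r • b r := by
  classical
  set V : (k → 𝕜) → Submodule 𝕜 E := fun γ => ⨅ i, eigenspace (T i) (γ i) with hV
  have hInternal : DirectSum.IsInternal V :=
    LinearMap.IsSymmetric.LinearMap.IsSymmetric.directSum_isInternal_of_pairwise_commute hSym hComm
  have hOF := LinearMap.IsSymmetric.orthogonalFamily_iInf_eigenspaces hSym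
  haveI : Fintype {γ : k → 𝕜 // V γ ≠ ⊥} :=
    hInternal.submodule_iSupIndep.fintypeNeBotOfFiniteDimensional
  have hInd' : iSupIndep (fun γ : {γ : k → 𝕜 // V γ ≠ ⊥} => V γ.1) :=
    hInternal.submodule_iSupIndep.comp Subtype.val_injective
  have hSup' : ⨆ γ : {γ : k → 𝕜 // V γ ≠ ⊥}, V γ.1 = ⊤ := by
    rw [← hInternal.submodule_iSup_eq_top]
    apply le_antisymm
    · exact iSup_le fun γ => le_iSup _ γ.1
    · refine iSup_le fun γ => ?_
      by_cases h : V γ = ⊥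
      · rw [h]; exact bot_le
      · exact le_iSup_of_le ⟨γ, h⟩ le_rfl
  have hInternal' : DirectSum.IsInternal (fun γ : {γ : k → 𝕜 // V γ ≠ ⊥} => V γ.1) :=
    DirectSum.isInternal_submodule_of_iSupIndep_of_iSup_eq_top hInd' hSup'
  have hOF' : OrthogonalFamily 𝕜 (fun γ : {γ : k → 𝕜 // V γ ≠ ⊥} => ↥(V γ.1))
      (fun γ => (V γ.1).subtypeₗᵢ) :=
    fun i j hij => hOF (fun h => hij (Subtype.ext h))
  refine ⟨hInternal'.subordinateOrthonormalBasis hn hOF',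
    fun i r => (hInternal'.subordinateOrthonormalBasisIndex hn r hOF').1 i, fun i r => ?_⟩
  apply mem_eigenspace_iff.1
  have := hInternal'.subordinateOrthonormalBasis_subordinate hn r hOF'
  exact (Submodule.mem_iInf _).1 this i

/-- Joint unitary diagonalization of a finite commuting family of Hermitian matrices. -/
theorem joint_diagonalization {q : ℕ} {k : Type*}
    (M : k → Matrix (Fin q) (Fin q) ℂ)
    (hH : ∀ i, (M i).IsHermitian) (hC : ∀ i j, M i * M j = M j * M i) :
    ∃ W ∈ Matrix.unitaryGroup (Fin q) ℂ, ∃ d : k → Fin q → ℂ,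
      ∀ i, M i = Wᴴ * Matrix.diagonal (d i) * W := by
  classical
  have hSym : ∀ i, (Matrix.toEuclideanLin (M i)).IsSymmetric :=
    fun i => (isHermitian_iff_isSymmetric).1 (hH i)
  have hComm : Pairwise (Function.onFun Commute fun i => Matrix.toEuclideanLin (M i)) := by
    intro i j _
    show _ * _ = _ * _
    have : ∀ a b : k, Matrix.toEuclideanLin (M a) * Matrix.toEuclideanLin (M b)
        = Matrix.toEuclideanLin (M a * M b) := by
      intro a b
      ext x j
      show Matrix.toEuclideanLin (M a) (Matrix.toEuclideanLin (M b) x) j = _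
      simp [Matrix.toEuclideanLin_apply, Matrix.mulVec_mulVec]
    rw [this, this, hC]
  obtain ⟨b, d, heig⟩ := joint_eigenbasis (finrank_euclideanSpace_fin (𝕜 := ℂ) (n := q))
    (fun i => Matrix.toEuclideanLin (M i)) hSym hComm
  have hmv : ∀ i r, M i *ᵥ ⇑(b r) = d i r • ⇑(b r) := by
    intro i r
    have := congr(⇑$(heig i r))
    simpa [Matrix.toEuclideanLin_apply] using this
  set U : Matrix (Fin q) (Fin q) ℂ :=
    (EuclideanSpace.basisFun (Fin q) ℂ).toBasis.toMatrix b.toBasis with hU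
  have hUmem : U ∈ Matrix.unitaryGroup (Fin q) ℂ :=
    (EuclideanSpace.basisFun (Fin q) ℂ).toMatrix_orthonormalBasis_mem_unitary b
  have hUapp : ∀ i j, U i j = b j i := fun i j => rfl
  have hUmv : ∀ j, U *ᵥ Pi.single j 1 = ⇑(b j) := by
    intro j; funext i
    simp [Matrix.mulVec_single, hUapp]
  have hUstar : ∀ j, (star U) *ᵥ ⇑(b j) = Pi.single j 1 := by
    intro j
    rw [← hUmv, Matrix.mulVec_mulVec]
    rw [show star U * U = 1 from Matrix.mem_unitaryGroup_iff'.mp hUmem]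
    exact Matrix.one_mulVec _
  have key : ∀ i, star U * M i * U = Matrix.diagonal (fun r => d i r) := by
    intro i
    apply Matrix.toEuclideanLin.injective
    apply Module.Basis.ext (EuclideanSpace.basisFun (Fin q) ℂ).toBasis
    intro j
    simp only [Matrix.toEuclideanLin_apply, OrthonormalBasis.coe_toBasis,
      EuclideanSpace.basisFun_apply, PiLp.ofLp_single, ← Matrix.mulVec_mulVec,
      hUmv, hmv, Matrix.mulVec_smul, hUstar, Matrix.diagonal_mulVec_single, mul_one]
    apply PiLp.ext
    intro m
    simp [EuclideanSpace.single_apply, Pi.single_apply, eq_comm]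
  refine ⟨star U, Unitary.star_mem hUmem, d, fun i => ?_⟩
  have h1 : (star U)ᴴ = U := by
    rw [← Matrix.star_eq_conjTranspose, star_star]
  have hUU : U * star U = 1 := Matrix.mem_unitaryGroup_iff.mp hUmem
  rw [h1]
  calc M i = 1 * M i * 1 := by rw [Matrix.one_mul, Matrix.mul_one]
    _ = (U * star U) * M i * (U * star U) := by rw [hUU]
    _ = U * (star U * M i * U) * star U := by simp only [Matrix.mul_assoc]
    _ = U * Matrix.diagonal (fun r => d i r) * star U := by rw [key i]

variable {X : Type*} {q : ℕ}

/-- `μ` is a (finitely atomic) representing measure of the linear map `L : E → H_q`. -/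
def IsMatRepMeasure (E : Submodule ℝ (X → ℝ)) (L : E →ₗ[ℝ] Matrix (Fin q) (Fin q) ℂ)
    (μ : X →₀ Matrix (Fin q) (Fin q) ℂ) : Prop :=
  (∀ x, (μ x).PosSemidef) ∧ ∀ f : E, L f = μ.sum fun x M => ((f : X → ℝ) x) • M

/-- `l : E → ℝ` is a scalar moment functional. -/
def IsScalarMomentFunctional (E : Submodule ℝ (X → ℝ)) (l : E →ₗ[ℝ] ℝ) : Prop :=
  ∃ w : X →₀ ℝ, (∀ x, 0 ≤ w x) ∧ ∀ f : E, l f = w.sum fun x c => (f : X → ℝ) x * c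

/-- `L` is diagonalizable:  unitarily equivalent to a direct sum of scalar moment
functionals. -/
def Diagonalizable (E : Submodule ℝ (X → ℝ)) (L : E →ₗ[ℝ] Matrix (Fin q) (Fin q) ℂ) : Prop :=
  ∃ U ∈ Matrix.unitaryGroup (Fin q) ℂ, ∃ l : Fin q → (E →ₗ[ℝ] ℝ),
    (∀ r, IsScalarMomentFunctional E (l r)) ∧
    ∀ f : E, L f = Uᴴ * Matrix.diagonal (fun r => (l r f : ℂ)) * U

/-- Sum of real-smul diagonal matrices is diagonal. -/
lemma sum_smul_diagonal {α : Type*} (s : Finset α) (f : α → ℝ) (c : α → Fin q → ℂ) :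
    ∑ x ∈ s, f x • Matrix.diagonal (c x)
      = Matrix.diagonal (fun r => ∑ x ∈ s, f x • c x r) := by
  ext i j
  by_cases h : i = j
  · subst h
    simp [Matrix.sum_apply]
  · simp [Matrix.sum_apply, Matrix.diagonal_apply_ne _ h]

lemma sum_smul_conj (U : Matrix (Fin q) (Fin q) ℂ) {α : Type*} (s : Finset α) (f : α → ℝ)
    (D : α → Matrix (Fin q) (Fin q) ℂ) :
    ∑ x ∈ s, f x • (Uᴴ * D x * U) = Uᴴ * (∑ x ∈ s, f x • D x) * U := by
  rw [Matrix.mul_sum, Matrix.sum_mul]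
  refine Finset.sum_congr rfl fun x _ => ?_
  rw [Matrix.mul_smul, Matrix.smul_mul]

lemma conj_diag_mul (U : Matrix (Fin q) (Fin q) ℂ) (hU : U ∈ Matrix.unitaryGroup (Fin q) ℂ)
    (a b : Fin q → ℂ) :
    (Uᴴ * Matrix.diagonal a * U) * (Uᴴ * Matrix.diagonal b * U)
      = Uᴴ * Matrix.diagonal (fun i => a i * b i) * U := by
  have hUU : U * Uᴴ = 1 := by
    rw [← Matrix.star_eq_conjTranspose]
    exact Matrix.mem_unitaryGroup_iff.mp hU
  calc (Uᴴ * Matrix.diagonal a * U) * (Uᴴ * Matrix.diagonal b * U)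
      = Uᴴ * Matrix.diagonal a * (U * Uᴴ) * Matrix.diagonal b * U := by
        simp only [Matrix.mul_assoc]
    _ = Uᴴ * (Matrix.diagonal a * Matrix.diagonal b) * U := by
        rw [hUU, Matrix.mul_one, Matrix.mul_assoc (Uᴴ)]
    _ = Uᴴ * Matrix.diagonal (fun i => a i * b i) * U := by rw [Matrix.diagonal_mul_diagonal]

/-- A nonzero matrix moment functional `L` on `E` is diagonalizable if and only if it has a
finitely atomic representing measure whose masses pairwise commute. -/
theorem diagonalizable_iff_commuting_masses (E : Submodule ℝ (X → ℝ))
    (hfin : FiniteDimensional ℝ E)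
    (L : E →ₗ[ℝ] Matrix (Fin q) (Fin q) ℂ)
    (hL : ∃ μ, IsMatRepMeasure E L μ) (hL0 : L ≠ 0) :
    Diagonalizable E L ↔
      ∃ μ, IsMatRepMeasure E L μ ∧ ∀ x y : X, μ x * μ y = μ y * μ x := by
  classical
  constructor
  · rintro ⟨U, hU, l, hl, hrep⟩
    choose w hw0 hwsum using hl
    set s : Finset X := Finset.univ.biUnion fun r : Fin q => (w r).support with hs
    have hws : ∀ r : Fin q, (w r).support ⊆ s := fun r x hx =>
      Finset.mem_biUnion.mpr ⟨r, Finset.mem_univ r, hx⟩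
    have hzero : ∀ x ∉ s, ∀ r : Fin q, w r x = 0 := by
      intro x hx r
      by_contra h
      exact hx (hws r (Finsupp.mem_support_iff.mpr h))
    have hν0 : ∀ x ∉ s,
        Uᴴ * Matrix.diagonal (fun r => ((w r x : ℝ) : ℂ)) * U = 0 := by
      intro x hxs
      have h1 : (fun r : Fin q => ((w r x : ℝ) : ℂ)) = fun _ => (0 : ℂ) := by
        funext r; rw [hzero x hxs r]; simp
      rw [h1, Matrix.diagonal_zero, Matrix.mul_zero, Matrix.zero_mul]
    set ν : X →₀ Matrix (Fin q) (Fin q) ℂ := Finsupp.onFinset s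
      (fun x => Uᴴ * Matrix.diagonal (fun r => ((w r x : ℝ) : ℂ)) * U)
      (by
        intro x hx
        by_contra hxs
        exact hx (hν0 x hxs)) with hν
    have hνapp : ∀ x, ν x = Uᴴ * Matrix.diagonal (fun r => ((w r x : ℝ) : ℂ)) * U :=
      fun x => Finsupp.onFinset_apply
    refine ⟨ν, ⟨fun x => ?_, fun f => ?_⟩, fun x y => ?_⟩
    · -- PSD
      rw [hνapp]
      refine Matrix.PosSemidef.conjTranspose_mul_mul_same ?_ U
      refine Matrix.posSemidef_diagonal_iff.mpr fun r => ?_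
      exact Complex.zero_le_real.mpr (hw0 r x)
    · -- representing
      rw [Finsupp.sum_of_support_subset ν Finsupp.support_onFinset_subset _
        (fun x _ => smul_zero _)]
      have h2 : ∀ x ∈ s, ((f : X → ℝ) x) • ν x
          = ((f : X → ℝ) x) • (Uᴴ * Matrix.diagonal (fun r => ((w r x : ℝ) : ℂ)) * U) := by
        intro x _; rw [hνapp]
      rw [Finset.sum_congr rfl h2, sum_smul_conj, sum_smul_diagonal]
      rw [hrep f]
      have h3 : (fun r => ∑ x ∈ s, (f : X → ℝ) x • ((w r x : ℝ) : ℂ))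
          = fun r => ((l r f : ℝ) : ℂ) := by
        funext r
        rw [hwsum r f, Finsupp.sum_of_support_subset (w r) (hws r) _
          (fun x _ => mul_zero _)]
        push_cast
        exact Finset.sum_congr rfl fun x _ => by rw [Complex.real_smul]
      rw [h3]
    · -- commuting
      rw [hνapp, hνapp, conj_diag_mul U hU, conj_diag_mul U hU]
      have h4 : (fun i => ((w i x : ℝ) : ℂ) * ((w i y : ℝ) : ℂ))
          = fun i => ((w i y : ℝ) : ℂ) * ((w i x : ℝ) : ℂ) := by
        funext i; exact mul_comm _ _
      rw [h4]
  · rintro ⟨μ, ⟨hpsd, hrep⟩, hcomm⟩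
    obtain ⟨W, hW, d, hWd⟩ := joint_diagonalization (fun x => μ x)
      (fun x => (hpsd x).isHermitian) hcomm
    have hWW : W * Wᴴ = 1 := by
      rw [← Matrix.star_eq_conjTranspose]
      exact Matrix.mem_unitaryGroup_iff.mp hW
    have hdiag : ∀ x, Matrix.diagonal (d x) = W * μ x * Wᴴ := by
      intro x
      rw [hWd x]
      symm
      calc W * (Wᴴ * Matrix.diagonal (d x) * W) * Wᴴ
          = (W * Wᴴ) * Matrix.diagonal (d x) * (W * Wᴴ) := by simp only [Matrix.mul_assoc]
        _ = Matrix.diagonal (d x) := by rw [hWW, Matrix.one_mul, Matrix.mul_one]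
    have hd0 : ∀ x r, 0 ≤ d x r := by
      intro x r
      have : (Matrix.diagonal (d x)).PosSemidef := by
        rw [hdiag x]
        exact (hpsd x).mul_mul_conjTranspose_same W
      exact Matrix.posSemidef_diagonal_iff.mp this r
    have hdre : ∀ x r, d x r = (((d x r).re : ℝ) : ℂ) := by
      intro x r
      obtain ⟨h1, h2⟩ := Complex.nonneg_iff.mp (hd0 x r)
      exact Complex.ext (by simp) (by simp [← h2])
    have hdzero : ∀ x ∉ μ.support, ∀ r, d x r = 0 := by
      intro x hx r
      have hx0 : μ x = 0 := Finsupp.notMem_support_iff.mp hx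
      have := hdiag x
      rw [hx0, Matrix.mul_zero, Matrix.zero_mul] at this
      calc d x r = Matrix.diagonal (d x) r r := (Matrix.diagonal_apply_eq _ r).symm
        _ = 0 := by rw [this]; rfl
    set l : Fin q → (E →ₗ[ℝ] ℝ) := fun r =>
      { toFun := fun f => ∑ x ∈ μ.support, (f : X → ℝ) x * (d x r).re
        map_add' := by
          intro f g
          simp only [Submodule.coe_add, Pi.add_apply, add_mul, Finset.sum_add_distrib]
        map_smul' := by
          intro c f
          simp only [SetLike.val_smul, Pi.smul_apply, smul_eq_mul, RingHom.id_apply,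
            Finset.mul_sum, mul_assoc] } with hldef
    have hlval : ∀ r (f : E), l r f = ∑ x ∈ μ.support, (f : X → ℝ) x * (d x r).re :=
      fun r f => rfl
    refine ⟨W, hW, l, fun r => ?_, fun f => ?_⟩
    · -- scalar moment functional
      refine ⟨Finsupp.onFinset μ.support (fun x => (d x r).re)
        (fun x hx => by
          by_contra hxs
          refine hx ?_
          show (d x r).re = 0
          rw [hdzero x hxs r]
          simp), fun x => ?_, fun f => ?_⟩
      · rw [Finsupp.onFinset_apply]
        exact (Complex.nonneg_iff.mp (hd0 x r)).1
      · rw [Finsupp.sum_of_support_subset _ Finsupp.support_onFinset_subset _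
          (fun x _ => mul_zero _), hlval]
        refine Finset.sum_congr rfl fun x _ => ?_
        rw [Finsupp.onFinset_apply]
    · -- diagonalization identity
      rw [hrep f]
      unfold Finsupp.sum
      have : ∀ x ∈ μ.support, ((f : X → ℝ) x) • μ x
          = ((f : X → ℝ) x) • (Wᴴ * Matrix.diagonal (d x) * W) := by
        intro x _; rw [hWd x]
      rw [Finset.sum_congr rfl this, sum_smul_conj, sum_smul_diagonal]
      have h5 : (fun r => ∑ x ∈ μ.support, (f : X → ℝ) x • d x r)
          = fun r => ((l r f : ℝ) : ℂ) := by
        funext r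
        rw [hlval r f]
        push_cast
        refine Finset.sum_congr rfl fun x _ => ?_
        rw [hdre x r, Complex.real_smul]
        simp
      rw [h5]
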